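/- The real Lie subalgebra of d×d complex matrices generated by 𝔥 ∪ 𝔥' is exactly the Lie algebra u(d) of skew-Hermitian matrices: a d×d complex matrix M lies in the Lie subalgebra generated by 𝔥 ∪ 𝔥' if and only if Mᴴ = −M (conjugate transpose equals negative). -/

import Mathlib

open scoped Matrix

attribute [local instance 100] LieRing.ofAssociativeRing

/-- The d×d Fourier matrix V with entries V_{jk} = ω^{jk}/√d, ω = exp(2πi/d). -/
noncomputable def fourierV (d : ℕ) : Matrix (Fin d) (Fin d) ℂ :=
  Matrix.of fun j k =>
    Complex.exp (2 * Real.pi * Complex.I / d) ^ ((j : ℕ) * (k : ℕ)) / (Real.sqrt d : ℂ)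

/-- 𝔥: the diagonal matrices diag(iα₀,…,iα_{d−1}) with real αⱼ. -/
def diagLie (d : ℕ) : Set (Matrix (Fin d) (Fin d) ℂ) :=
  {A | ∃ α : Fin d → ℝ, A = Matrix.diagonal fun j => Complex.I * (α j : ℂ)}

/-- 𝔥' = V 𝔥 V⁻¹. -/
noncomputable def diagLieConj (d : ℕ) : Set (Matrix (Fin d) (Fin d) ℂ) :=
  {A | ∃ B ∈ diagLie d, A = fourierV d * B * (fourierV d)⁻¹}

namespace FourierAux

open Complex Finset

noncomputable def ζ (d : ℕ) : ℂ := Complex.exp (2 * Real.pi * Complex.I / d)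

variable (d : ℕ) [NeZero d]

lemma hprim : IsPrimitiveRoot (ζ d) d :=
  Complex.isPrimitiveRoot_exp d (NeZero.ne d)

lemma zeta_ne_zero : ζ d ≠ 0 := Complex.exp_ne_zero _

lemma star_zeta : (starRingEnd ℂ) (ζ d) = (ζ d)⁻¹ := by
  have h : (starRingEnd ℂ) (2 * (Real.pi : ℂ) * Complex.I / d) =
      -(2 * (Real.pi : ℂ) * Complex.I / d) := by
    simp [map_div₀, Complex.conj_I, map_ofNat]
    ring
  rw [ζ, ← Complex.exp_conj, h, Complex.exp_neg]

lemma sum_pow (x : ℂ) (hx : x ^ d = 1) :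
    ∑ m : Fin d, x ^ (m : ℕ) = if x = 1 then (d : ℂ) else 0 := by
  rw [Fin.sum_univ_eq_sum_range fun n => x ^ n]
  split_ifs with h
  · simp [h]
  · rw [geom_sum_eq h d, hx]
    simp

lemma sum_zpow (s : ℤ) :
    ∑ m : Fin d, (ζ d) ^ ((m : ℤ) * s) = if (d : ℤ) ∣ s then (d : ℂ) else 0 := by
  have h1 : ∀ m : Fin d, (ζ d) ^ ((m : ℤ) * s) = ((ζ d) ^ s) ^ (m : ℕ) := by
    intro m
    rw [← zpow_natCast ((ζ d) ^ s) (m : ℕ), ← zpow_mul, mul_comm]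
  simp_rw [h1]
  have hx : ((ζ d) ^ s) ^ d = 1 := by
    rw [← zpow_natCast ((ζ d) ^ s) d, ← zpow_mul, mul_comm, zpow_mul, zpow_natCast,
      (hprim d).pow_eq_one, one_zpow]
  rw [sum_pow d _ hx, if_congr ((hprim d).zpow_eq_one_iff_dvd s) rfl rfl]

lemma dvd_sub_iff (j k : Fin d) : (d : ℤ) ∣ (j : ℤ) - (k : ℤ) ↔ j = k := by
  constructor
  · intro h
    have h2 : (((j : ℤ) - (k : ℤ) : ℤ) : ZMod d) = 0 :=
      (ZMod.intCast_zmod_eq_zero_iff_dvd _ d).2 h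
    have h3 : ((j : ℕ) : ZMod d) = ((k : ℕ) : ZMod d) := by
      push_cast at h2
      linear_combination h2
    have h4 := congrArg ZMod.val h3
    rw [ZMod.val_cast_of_lt j.isLt, ZMod.val_cast_of_lt k.isLt] at h4
    exact Fin.ext h4
  · rintro rfl; simp

lemma sqrt_mul_self : ((Real.sqrt d : ℂ)) * (Real.sqrt d : ℂ) = (d : ℂ) := by
  rw [← Complex.ofReal_mul, Real.mul_self_sqrt (Nat.cast_nonneg d)]
  push_cast; ring

lemma sqrtd_ne_zero : ((Real.sqrt d : ℂ)) ≠ 0 := by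
  have h : (0 : ℝ) < Real.sqrt d :=
    Real.sqrt_pos.2 (by exact_mod_cast Nat.pos_of_ne_zero (NeZero.ne d))
  exact_mod_cast h.ne'

lemma d_ne_zero : ((d : ℂ)) ≠ 0 := by
  exact_mod_cast NeZero.ne d

lemma fourierV_apply (j k : Fin d) :
    fourierV d j k = (ζ d) ^ ((j : ℤ) * (k : ℤ)) / (Real.sqrt d : ℂ) := by
  show (ζ d) ^ ((j : ℕ) * (k : ℕ)) / (Real.sqrt d : ℂ) = _
  rw [← zpow_natCast (ζ d) ((j : ℕ) * (k : ℕ))]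
  push_cast
  rfl

/-- master entry formula for V ⬝ diagonal f ⬝ Vᴴ -/
lemma mul_diag_conj_apply (f : Fin d → ℂ) (p q : Fin d) :
    (fourierV d * Matrix.diagonal f * (fourierV d)ᴴ) p q
      = (d : ℂ)⁻¹ * ∑ m : Fin d, f m * (ζ d) ^ ((m : ℤ) * ((p : ℤ) - (q : ℤ))) := by
  rw [Matrix.mul_apply, Finset.mul_sum]
  apply Finset.sum_congr rfl
  intro m _
  rw [Matrix.mul_diagonal, Matrix.conjTranspose_apply, fourierV_apply, fourierV_apply]
  rw [show (star : ℂ → ℂ) = (starRingEnd ℂ) from rfl]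
  rw [map_div₀, map_zpow₀, star_zeta, inv_zpow']
  rw [show ((starRingEnd ℂ) ((Real.sqrt d : ℝ) : ℂ)) = ((Real.sqrt d : ℝ) : ℂ) from
    Complex.conj_ofReal _]
  have hzz : ζ d ^ ((p : ℤ) * (m : ℤ)) * ζ d ^ (-((q : ℤ) * (m : ℤ)))
      = ζ d ^ ((m : ℤ) * ((p : ℤ) - (q : ℤ))) := by
    rw [← zpow_add₀ (zeta_ne_zero d)]
    congr 1
    ring
  rw [div_mul_eq_mul_div, div_mul_div_comm, sqrt_mul_self, div_eq_inv_mul]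
  linear_combination ((d : ℂ))⁻¹ * f m * hzz

lemma V_mul_conjT : fourierV d * (fourierV d)ᴴ = 1 := by
  ext p q
  have h := mul_diag_conj_apply d (fun _ => (1 : ℂ)) p q
  rw [Matrix.diagonal_one, mul_one] at h
  rw [h]
  simp_rw [one_mul]
  rw [sum_zpow]
  by_cases hpq : p = q
  · subst hpq
    simp [d_ne_zero, Matrix.one_apply, inv_mul_cancel₀]
  · rw [if_neg (fun hc => hpq ((dvd_sub_iff d p q).1 hc))]
    simp [Matrix.one_apply, hpq]

lemma V_inv : (fourierV d)⁻¹ = (fourierV d)ᴴ :=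
  Matrix.inv_eq_right_inv (V_mul_conjT d)

/-- Bracket of a diagonal matrix with an arbitrary matrix. -/
lemma diag_bracket (f : Fin d → ℂ) (A : Matrix (Fin d) (Fin d) ℂ) :
    ⁅Matrix.diagonal f, A⁆ = Matrix.of fun p q => (f p - f q) * A p q := by
  ext p q
  rw [Ring.lie_def]
  simp only [Matrix.sub_apply, Matrix.diagonal_mul, Matrix.mul_diagonal, Matrix.of_apply]
  ring

/-- The indicator diagonal matrix i·E_{jj}. -/
noncomputable def Dmat (j : Fin d) : Matrix (Fin d) (Fin d) ℂ :=
  Matrix.diagonal fun p => if p = j then Complex.I else 0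

lemma Dmat_mem (j : Fin d) : Dmat d j ∈ diagLie d := by
  refine ⟨fun p => if p = j then 1 else 0, ?_⟩
  rw [Dmat]
  have h : (fun p => if p = j then Complex.I else 0)
      = fun p => Complex.I * (((if p = j then (1 : ℝ) else 0) : ℝ) : ℂ) := by
    funext p
    by_cases h : p = j <;> simp [h]
  rw [h]

/-- The coefficient c for a pair (j,k). -/
noncomputable def cc (j k : Fin d) : ℝ :=
  if (d : ℤ) ∣ 2 * ((j : ℤ) - (k : ℤ)) then 2 else 1

lemma cc_pos (j k : Fin d) : 0 < cc d j k := by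
  rw [cc]; split_ifs <;> norm_num

/-- The real diagonal data whose Fourier conjugate is the basic circulant. -/
noncomputable def alphaJK (j k : Fin d) : Fin d → ℝ :=
  fun m => 2 * Real.cos (2 * Real.pi * (m : ℝ) * (((j : ℤ) - (k : ℤ) : ℤ) : ℝ) / d)

lemma alphaJK_eq (j k : Fin d) (m : Fin d) :
    ((alphaJK d j k m : ℝ) : ℂ)
      = (ζ d) ^ ((m : ℤ) * ((j : ℤ) - (k : ℤ)))
        + (ζ d) ^ (-((m : ℤ) * ((j : ℤ) - (k : ℤ)))) := by
  have hz : ∀ s : ℤ, (ζ d) ^ s = Complex.exp ((s : ℂ) * (2 * Real.pi * Complex.I / d)) := by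
    intro s
    rw [ζ, ← Complex.exp_int_mul]
  rw [alphaJK, hz, hz]
  set θ : ℝ := 2 * Real.pi * (m : ℝ) * (((j : ℤ) - (k : ℤ) : ℤ) : ℝ) / d with hθ
  have h1 : (((m : ℤ) * ((j : ℤ) - (k : ℤ)) : ℤ) : ℂ) * (2 * Real.pi * Complex.I / d)
      = (θ : ℂ) * Complex.I := by
    rw [hθ]; push_cast; ring
  have h2 : ((-((m : ℤ) * ((j : ℤ) - (k : ℤ))) : ℤ) : ℂ) * (2 * Real.pi * Complex.I / d)
      = ((-θ : ℝ) : ℂ) * Complex.I := by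
    rw [hθ]; push_cast; ring
  rw [h1, h2, Complex.exp_mul_I, Complex.exp_mul_I, Complex.ofReal_neg, Complex.cos_neg,
    Complex.sin_neg]
  push_cast [Complex.ofReal_cos]
  ring

/-- The basic circulant matrix for the pair (j,k). -/
noncomputable def Cmat (j k : Fin d) : Matrix (Fin d) (Fin d) ℂ :=
  fourierV d * Matrix.diagonal (fun m => Complex.I * ((alphaJK d j k m : ℝ) : ℂ))
    * (fourierV d)ᴴ

lemma Cmat_mem (j k : Fin d) : Cmat d j k ∈ diagLieConj d := by
  refine ⟨Matrix.diagonal (fun m => Complex.I * ((alphaJK d j k m : ℝ) : ℂ)),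
    ⟨alphaJK d j k, rfl⟩, ?_⟩
  rw [V_inv, Cmat]

lemma Cmat_apply (j k p q : Fin d) (s : ℤ) (hs : (p : ℤ) - (q : ℤ) = s) :
    Cmat d j k p q
      = Complex.I * (d : ℂ)⁻¹ *
        ((if (d : ℤ) ∣ (((j : ℤ) - (k : ℤ)) + s) then (d : ℂ) else 0)
          + (if (d : ℤ) ∣ (s - ((j : ℤ) - (k : ℤ))) then (d : ℂ) else 0)) := by
  set t : ℤ := (j : ℤ) - (k : ℤ) with ht
  rw [Cmat, mul_diag_conj_apply, hs]
  have hterm : ∀ m : Fin d,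
      Complex.I * ((alphaJK d j k m : ℝ) : ℂ) * (ζ d) ^ ((m : ℤ) * s)
        = Complex.I * ((ζ d) ^ ((m : ℤ) * (t + s)) + (ζ d) ^ ((m : ℤ) * (s - t))) := by
    intro m
    rw [alphaJK_eq, ← ht]
    have e1 : (ζ d) ^ ((m : ℤ) * t) * (ζ d) ^ ((m : ℤ) * s)
        = (ζ d) ^ ((m : ℤ) * (t + s)) := by
      rw [← zpow_add₀ (zeta_ne_zero d)]
      congr 1
      ring
    have e2 : (ζ d) ^ (-((m : ℤ) * t)) * (ζ d) ^ ((m : ℤ) * s)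
        = (ζ d) ^ ((m : ℤ) * (s - t)) := by
      rw [← zpow_add₀ (zeta_ne_zero d)]
      congr 1
      ring
    linear_combination Complex.I * e1 + Complex.I * e2
  simp_rw [hterm]
  rw [← Finset.mul_sum, Finset.sum_add_distrib, sum_zpow, sum_zpow]
  ring

lemma Cmat_jk (j k : Fin d) :
    Cmat d j k j k = Complex.I * ((cc d j k : ℝ) : ℂ) := by
  rw [Cmat_apply d j k j k ((j : ℤ) - (k : ℤ)) rfl]
  rw [cc]
  have h0 : (d : ℤ) ∣ ((j : ℤ) - (k : ℤ)) - ((j : ℤ) - (k : ℤ)) := by simp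
  rw [if_pos h0]
  have he : ((j : ℤ) - (k : ℤ)) + ((j : ℤ) - (k : ℤ)) = 2 * ((j : ℤ) - (k : ℤ)) := by ring
  simp only [he]
  split_ifs with h
  · push_cast
    field_simp [d_ne_zero]
    rw [mul_div_cancel_left₀ _ (d_ne_zero d)]; norm_num
  · push_cast
    field_simp [d_ne_zero]
    rw [zero_add, div_self (d_ne_zero d)]

lemma Cmat_kj (j k : Fin d) :
    Cmat d j k k j = Complex.I * ((cc d j k : ℝ) : ℂ) := by
  rw [Cmat_apply d j k k j ((k : ℤ) - (j : ℤ)) rfl]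
  rw [cc]
  have h0 : (d : ℤ) ∣ ((j : ℤ) - (k : ℤ)) + ((k : ℤ) - (j : ℤ)) := by
    rw [show ((j : ℤ) - (k : ℤ)) + ((k : ℤ) - (j : ℤ)) = 0 by ring]
    exact dvd_zero _
  rw [if_pos h0]
  have he : ((k : ℤ) - (j : ℤ)) - ((j : ℤ) - (k : ℤ)) = -(2 * ((j : ℤ) - (k : ℤ))) := by ring
  simp only [he, dvd_neg]
  split_ifs with h
  · push_cast
    field_simp [d_ne_zero]
    rw [mul_div_cancel_left₀ _ (d_ne_zero d)]; norm_num
  · push_cast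
    field_simp [d_ne_zero]
    rw [add_zero, div_self (d_ne_zero d)]

/-- The Lie subalgebra of skew-hermitian matrices. -/
noncomputable def uSkew : LieSubalgebra ℝ (Matrix (Fin d) (Fin d) ℂ) where
  carrier := {M | Mᴴ = -M}
  add_mem' := by
    intro a b ha hb
    simp only [Set.mem_setOf_eq] at *
    rw [Matrix.conjTranspose_add, ha, hb, neg_add]
  zero_mem' := by simp
  smul_mem' := by
    intro r M hM
    simp only [Set.mem_setOf_eq] at *
    rw [Matrix.conjTranspose_smul, hM, star_trivial, smul_neg]
  lie_mem' := by
    intro x y hx hy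
    simp only [Set.mem_setOf_eq] at *
    rw [Ring.lie_def, Matrix.conjTranspose_sub, Matrix.conjTranspose_mul,
      Matrix.conjTranspose_mul, hx, hy]
    simp only [Matrix.neg_mul, Matrix.mul_neg, neg_neg, neg_sub]

lemma union_subset_uSkew : diagLie d ∪ diagLieConj d ⊆ (uSkew d : Set _) := by
  have hstar : ∀ α : Fin d → ℝ, (star fun j => Complex.I * ((α j : ℝ) : ℂ))
      = fun j => -(Complex.I * ((α j : ℝ) : ℂ)) := by
    intro α
    funext p
    simp [Complex.ext_iff]
  rintro A (⟨α, rfl⟩ | ⟨B, ⟨α, rfl⟩, rfl⟩)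
  · show (Matrix.diagonal _)ᴴ = _
    rw [Matrix.diagonal_conjTranspose, hstar, Matrix.diagonal_neg]
  · show (fourierV d * _ * (fourierV d)⁻¹)ᴴ = _
    rw [V_inv]
    rw [Matrix.conjTranspose_mul, Matrix.conjTranspose_mul, Matrix.conjTranspose_conjTranspose,
      Matrix.diagonal_conjTranspose, hstar]
    have h2 : (Matrix.diagonal fun j => -(Complex.I * ((α j : ℝ) : ℂ)))
        = -Matrix.diagonal fun j => Complex.I * ((α j : ℝ) : ℂ) := (Matrix.diagonal_neg _).symm
    rw [h2, Matrix.neg_mul, Matrix.mul_neg, Matrix.mul_assoc]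

/-- The elementary skew-hermitian matrix supported on a pair. -/
noncomputable def Bmat (j k : Fin d) (z : ℂ) : Matrix (Fin d) (Fin d) ℂ :=
  Matrix.of fun p q => if p = j ∧ q = k then z
    else if p = k ∧ q = j then -((starRingEnd ℂ) z) else 0

lemma Bmat_mem (j k : Fin d) (hjk : j ≠ k) (z : ℂ) :
    Bmat d j k z ∈ LieSubalgebra.lieSpan ℝ (Matrix (Fin d) (Fin d) ℂ)
      (diagLie d ∪ diagLieConj d) := by
  set S := LieSubalgebra.lieSpan ℝ (Matrix (Fin d) (Fin d) ℂ)
    (diagLie d ∪ diagLieConj d) with hSdef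
  have hDj : Dmat d j ∈ S := LieSubalgebra.subset_lieSpan (Or.inl (Dmat_mem d j))
  have hDk : Dmat d k ∈ S := LieSubalgebra.subset_lieSpan (Or.inl (Dmat_mem d k))
  have hC : Cmat d j k ∈ S := LieSubalgebra.subset_lieSpan (Or.inr (Cmat_mem d j k))
  set A : Matrix (Fin d) (Fin d) ℂ :=
    Matrix.of (fun p q => if p = j ∧ q = k then Complex.I
      else if p = k ∧ q = j then Complex.I else 0) with hAdef
  have hN : ⁅Dmat d k, ⁅Dmat d j, Cmat d j k⁆⁆ = ((cc d j k : ℝ)) • A := by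
    rw [Dmat, diag_bracket, Dmat, diag_bracket]
    ext p q
    simp only [Matrix.of_apply, Matrix.smul_apply, hAdef]
    by_cases hpj : p = j <;> by_cases hqk : q = k <;> by_cases hpk : p = k <;>
        by_cases hqj : q = j <;>
      simp_all [real_smul, Cmat_jk, Cmat_kj] <;>
      linear_combination (-((cc d j k : ℝ) : ℂ) * Complex.I) * Complex.I_mul_I
  have hNmem : ((cc d j k : ℝ)) • A ∈ S := hN ▸ S.lie_mem hDk (S.lie_mem hDj hC)
  have hAmem : A ∈ S := by
    have h2 := S.smul_mem (cc d j k)⁻¹ hNmem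
    rwa [smul_smul, inv_mul_cancel₀ (cc_pos d j k).ne', one_smul] at h2
  set Sm : Matrix (Fin d) (Fin d) ℂ :=
    Matrix.of (fun p q => if p = j ∧ q = k then (1 : ℂ)
      else if p = k ∧ q = j then -1 else 0) with hSmdef
  have hSN : ⁅Dmat d j, A⁆ = (-1 : ℝ) • Sm := by
    rw [Dmat, diag_bracket]
    ext p q
    simp only [Matrix.of_apply, Matrix.smul_apply, hAdef, hSmdef]
    by_cases hpj : p = j <;> by_cases hqk : q = k <;> by_cases hpk : p = k <;>
        by_cases hqj : q = j <;>
      simp_all [real_smul] <;>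
      first
        | linear_combination Complex.I_mul_I
        | linear_combination -Complex.I_mul_I
  have hSmMem : Sm ∈ S := by
    have h2 := S.smul_mem (-1 : ℝ) (hSN ▸ S.lie_mem hDj hAmem)
    rwa [smul_smul, neg_mul_neg, one_mul, one_smul] at h2
  have hB : Bmat d j k z = z.re • Sm + z.im • A := by
    ext p q
    simp only [Bmat, Matrix.of_apply, Matrix.add_apply, Matrix.smul_apply, hAdef, hSmdef,
      real_smul]
    split_ifs with h1 h2
    · simp [Complex.re_add_im]
    · apply Complex.ext <;> simp
    · simp
  rw [hB]
  exact S.add_mem (S.smul_mem _ hSmMem) (S.smul_mem _ hAmem)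

end FourierAux

open FourierAux in
/-- The real Lie subalgebra generated by 𝔥 ∪ 𝔥' is exactly u(d): a d×d complex
    matrix M lies in it if and only if Mᴴ = −M. -/
theorem lieSpan_diag_conj_eq_skewHermitian (d : ℕ) [NeZero d]
    (M : Matrix (Fin d) (Fin d) ℂ) :
    M ∈ LieSubalgebra.lieSpan ℝ (Matrix (Fin d) (Fin d) ℂ) (diagLie d ∪ diagLieConj d) ↔
      Mᴴ = -M := by
  constructor
  · intro hM
    exact (LieSubalgebra.lieSpan_le.2 (union_subset_uSkew d)) hM
  · intro hM
    classical
    set S := LieSubalgebra.lieSpan ℝ (Matrix (Fin d) (Fin d) ℂ)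
      (diagLie d ∪ diagLieConj d) with hSdef
    have hskew : ∀ p q, (starRingEnd ℂ) (M q p) = -(M p q) := by
      intro p q
      have h := congrFun (congrFun hM p) q
      simpa [Matrix.conjTranspose_apply, Matrix.neg_apply] using h
    have hdiag : Matrix.diagonal (fun p => M p p) ∈ S := by
      apply LieSubalgebra.subset_lieSpan
      left
      refine ⟨fun p => (M p p).im, ?_⟩
      have hval : ∀ p, M p p = Complex.I * (((M p p).im : ℝ) : ℂ) := by
        intro p
        have h0 := hskew p p
        have hre : (M p p).re = 0 := by
          have h1 := congrArg Complex.re h0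
          simp only [Complex.conj_re, Complex.neg_re] at h1
          linarith
        apply Complex.ext <;> simp [hre]
      exact congrArg Matrix.diagonal (funext hval)
    have hdecomp : M = Matrix.diagonal (fun p => M p p)
        + (2 : ℝ)⁻¹ • ∑ j : Fin d, ∑ k : Fin d,
            (if j = k then (0 : Matrix (Fin d) (Fin d) ℂ) else Bmat d j k (M j k)) := by
      ext p q
      simp only [Matrix.add_apply, Matrix.smul_apply, Matrix.sum_apply]
      have hcl : ∀ j k : Fin d,
          (if j = k then (0 : Matrix (Fin d) (Fin d) ℂ) else Bmat d j k (M j k)) p q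
            = (if j = p ∧ k = q ∧ p ≠ q then M p q else 0)
              + (if j = q ∧ k = p ∧ p ≠ q then M p q else 0) := by
        intro j k
        by_cases hjk : j = k
        · subst hjk
          rw [if_pos rfl]
          rw [if_neg (by rintro ⟨rfl, rfl, h⟩; exact h rfl),
            if_neg (by rintro ⟨rfl, rfl, h⟩; exact h rfl)]
          simp
        · rw [if_neg hjk, Bmat, Matrix.of_apply]
          by_cases hpj : p = j <;> by_cases hqk : q = k <;> by_cases hpk : p = k <;>
              by_cases hqj : q = j <;>
            simp_all [hskew, @eq_comm (Fin d)]
      simp_rw [hcl, Finset.sum_add_distrib]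
      have hsum1 : ∀ v : ℂ, (∑ j : Fin d, ∑ k : Fin d,
          if j = p ∧ k = q ∧ p ≠ q then v else 0) = if p ≠ q then v else 0 := by
        intro v
        simp [ite_and, Finset.sum_ite_eq, Finset.sum_ite_eq']
      have hsum2 : ∀ v : ℂ, (∑ j : Fin d, ∑ k : Fin d,
          if j = q ∧ k = p ∧ p ≠ q then v else 0) = if p ≠ q then v else 0 := by
        intro v
        simp [ite_and, Finset.sum_ite_eq, Finset.sum_ite_eq']
      rw [hsum1, hsum2]
      by_cases hpq : p = q
      · subst hpq
        simp [Matrix.diagonal_apply_eq]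
      · rw [Matrix.diagonal_apply_ne _ hpq, if_pos hpq, Complex.real_smul]
        push_cast
        ring
    rw [hdecomp]
    rw [← LieSubalgebra.mem_toSubmodule S]
    apply Submodule.add_mem
    · exact (LieSubalgebra.mem_toSubmodule S).2 hdiag
    · apply Submodule.smul_mem
      apply Submodule.sum_mem
      intro j _
      apply Submodule.sum_mem
      intro k _
      by_cases hjk : j = k
      · simp [hjk]
      · rw [if_neg hjk]
        exact (LieSubalgebra.mem_toSubmodule _).2 (Bmat_mem d j k hjk (M j k))
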